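/- Let λ ≠ 0, m ≠ 1, and A be real constants. The function u(x,t) = (1/(λ(m−1)t) + A e^{−λ(m−1)x}/t)^{1/(m−1)} satisfies u_t + u^{m−1}·u_x + λ·u^m = 0 at every point (x,t) with t ≠ 0 at which the base 1/(λ(m−1)t) + A e^{−λ(m−1)x}/t is positive. -/

import Mathlib

open Real

/-- the function
`u(x,t) = (1/(λ(m−1)t) + A e^{−λ(m−1)x}/t)^{1/(m−1)}` satisfies
`u_t + u^{m−1}·u_x + λ·u^m = 0` at every point with `t ≠ 0` at which the base
`1/(λ(m−1)t) + A e^{−λ(m−1)x}/t` is positive. -/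
theorem case2_invariant_solution
    (lam m A : ℝ) (hlam : lam ≠ 0) (hm : m ≠ 1) :
    ∀ u : ℝ × ℝ → ℝ,
      u = (fun p : ℝ × ℝ =>
        (1 / (lam * (m - 1) * p.2)
          + A * exp (-(lam * (m - 1) * p.1)) / p.2) ^ (1 / (m - 1))) →
      ∀ x t : ℝ, t ≠ 0 →
        0 < 1 / (lam * (m - 1) * t) + A * exp (-(lam * (m - 1) * x)) / t →
        fderiv ℝ u (x, t) (0, 1) + u (x, t) ^ (m - 1) * fderiv ℝ u (x, t) (1, 0)
          + lam * u (x, t) ^ m = 0 := by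
  intro u hu x t ht hpos
  subst hu
  have hm1 : m - 1 ≠ 0 := sub_ne_zero.mpr hm
  set c : ℝ := lam * (m - 1) with hc
  have hcne : c ≠ 0 := mul_ne_zero hlam hm1
  -- rewrite the function
  have hfun : (fun p : ℝ × ℝ =>
      (1 / (c * p.2) + A * exp (-(c * p.1)) / p.2) ^ (1 / (m - 1)))
      = (fun p : ℝ × ℝ => ((c⁻¹ + A * exp (-(c * p.1))) * p.2⁻¹) ^ (1 / (m - 1))) := by
    funext p
    congr 1
    simp [div_eq_mul_inv, mul_inv]
    ring
  rw [hfun]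
  set E : ℝ := exp (-(c * x)) with hE
  set B : ℝ := c⁻¹ + A * E with hB
  have hbval : (1 : ℝ) / (c * t) + A * E / t = B * t⁻¹ := by
    simp [hB, div_eq_mul_inv, mul_inv]; ring
  have hbpos : 0 < B * t⁻¹ := by rw [← hbval]; exact hpos
  -- derivative of first factor
  have h1 : HasFDerivAt (fun p : ℝ × ℝ => c⁻¹ + A * exp (-(c * p.1)))
      ((A * (E * (-c))) • (ContinuousLinearMap.fst ℝ ℝ ℝ)) (x, t) := by
    have ha : HasFDerivAt (fun p : ℝ × ℝ => -(c * p.1))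
        ((-c) • (ContinuousLinearMap.fst ℝ ℝ ℝ)) (x, t) := by
      have h := ((hasFDerivAt_fst (p := (x, t)) (𝕜 := ℝ)).const_mul c).neg
      refine h.congr_fderiv ?_
      refine ContinuousLinearMap.ext fun v => ?_
      simp
    have hb := ha.exp
    have hc2 := hb.const_mul A
    have hd := hc2.const_add c⁻¹
    refine hd.congr_fderiv ?_
    refine ContinuousLinearMap.ext fun v => ?_
    simp [hE]
    ring
  -- derivative of second factor
  have h2 : HasFDerivAt (fun p : ℝ × ℝ => p.2⁻¹)
      ((-(t ^ 2)⁻¹) • (ContinuousLinearMap.snd ℝ ℝ ℝ)) (x, t) := by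
    exact (hasDerivAt_inv ht).comp_hasFDerivAt (x, t) (hasFDerivAt_snd)
  have hmul := h1.mul h2
  have hpow := hmul.rpow_const (p := 1 / (m - 1)) (Or.inl (by
    show (c⁻¹ + A * exp (-(c * x))) * t⁻¹ ≠ 0
    rw [← hE, ← hB]; exact hbpos.ne'))
  rw [(show HasFDerivAt (fun p : ℝ × ℝ => ((c⁻¹ + A * exp (-(c * p.1))) * p.2⁻¹) ^ (1 / (m - 1))) _ (x, t) from hpow).fderiv]
  simp only [ContinuousLinearMap.smul_apply, ContinuousLinearMap.add_apply, Pi.mul_apply,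
    ContinuousLinearMap.coe_fst', ContinuousLinearMap.coe_snd', smul_eq_mul, ← hE, ← hB]
  -- now pure algebra
  have e1 : ((B * t⁻¹) ^ (1 / (m - 1))) ^ (m - 1) = B * t⁻¹ := by
    rw [← Real.rpow_mul hbpos.le, one_div, inv_mul_cancel₀ hm1, Real.rpow_one]
  have e2 : ((B * t⁻¹) ^ (1 / (m - 1))) ^ m
      = (B * t⁻¹) ^ (1 / (m - 1) - 1) * (B * t⁻¹) * (B * t⁻¹) := by
    rw [← Real.rpow_mul hbpos.le]
    have hexp : 1 / (m - 1) * m = 1 / (m - 1) - 1 + 1 + 1 := by field_simp; ring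
    rw [hexp, Real.rpow_add hbpos, Real.rpow_add hbpos, Real.rpow_one]
  rw [e1, e2]
  set s : ℝ := (B * t⁻¹) ^ (1 / (m - 1) - 1) with hs
  rw [hB, hc]
  field_simp
  ring
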